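/- Fix T > 0 and for each real a with a·T < 1 let k^u(a) denote the unique k > |a| satisfying T·√(k² − a²) = arccos(a/k). Then for every a with a·T < 1 one has k^u(a)²·T > a, the function a ↦ k^u(a) is differentiable at a, and its derivative equals k^u(a)·(a·T − 1) / (k^u(a)²·T − a), which is strictly negative. -/

import Mathlib

open Real Set Topology Filter

private lemma aux_sc_lt (θ : ℝ) (hθ : 0 < θ) : Real.sin θ * Real.cos θ < θ := by
  have h := Real.sin_lt (by linarith : (0:ℝ) < 2 * θ)
  rw [Real.sin_two_mul] at h
  linarith

private lemma aux_tc_lt {θ : ℝ} (h1 : 0 < θ) (h2 : θ < Real.pi) :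
    θ * Real.cos θ < Real.sin θ := by
  have hs : 0 < Real.sin θ := Real.sin_pos_of_pos_of_lt_pi h1 h2
  rcases le_or_gt (Real.cos θ) 0 with hc | hc
  · nlinarith
  · have hπ : θ < Real.pi / 2 := by
      by_contra h
      push_neg at h
      have := Real.cos_nonpos_of_pi_div_two_le_of_le h (by linarith [Real.pi_pos])
      linarith
    have ht := Real.lt_tan h1 hπ
    rw [Real.tan_eq_sin_div_cos] at ht
    calc θ * Real.cos θ < (Real.sin θ / Real.cos θ) * Real.cos θ := by
          exact mul_lt_mul_of_pos_right ht hc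
      _ = Real.sin θ := by field_simp

private noncomputable def auxA (T θ : ℝ) : ℝ := θ * Real.cos θ / (T * Real.sin θ)

private lemma auxA_deriv (T : ℝ) (hT : 0 < T) {θ : ℝ} (h1 : 0 < θ) (h2 : θ < Real.pi) :
    HasDerivAt (auxA T) ((Real.sin θ * Real.cos θ - θ) / (T * Real.sin θ ^ 2)) θ := by
  have hs : 0 < Real.sin θ := Real.sin_pos_of_pos_of_lt_pi h1 h2
  have hu : HasDerivAt (fun x : ℝ => x * Real.cos x) (1 * Real.cos θ + θ * -Real.sin θ) θ :=
    (hasDerivAt_id θ).mul (Real.hasDerivAt_cos θ)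
  have hv : HasDerivAt (fun x : ℝ => T * Real.sin x) (T * Real.cos θ) θ :=
    (Real.hasDerivAt_sin θ).const_mul T
  have hvne : T * Real.sin θ ≠ 0 := mul_ne_zero hT.ne' hs.ne'
  have hd := hu.div hv hvne
  refine (hd.congr_deriv ?_ : HasDerivAt (auxA T) _ θ)
  symm
  have hpyth := Real.sin_sq_add_cos_sq θ
  rw [div_eq_div_iff (mul_ne_zero hT.ne' (pow_ne_zero 2 hs.ne')) (pow_ne_zero 2 hvne)]
  linear_combination (T ^ 2 * Real.sin θ ^ 2 * θ) * hpyth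

theorem stmt5 (T : ℝ) (hT : 0 < T) (ku : ℝ → ℝ)
    (hku : ∀ a : ℝ, a * T < 1 →
      |a| < ku a ∧ T * Real.sqrt ((ku a) ^ 2 - a ^ 2) = Real.arccos (a / ku a)) :
    ∀ a : ℝ, a * T < 1 →
      (ku a) ^ 2 * T > a ∧
      HasDerivAt ku (ku a * (a * T - 1) / ((ku a) ^ 2 * T - a)) a ∧
      ku a * (a * T - 1) / ((ku a) ^ 2 * T - a) < 0 := by
  have key : ∀ x : ℝ, x * T < 1 →
      0 < Real.arccos (x / ku x) ∧ Real.arccos (x / ku x) < Real.pi ∧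
      ku x = Real.arccos (x / ku x) / (T * Real.sin (Real.arccos (x / ku x))) ∧
      auxA T (Real.arccos (x / ku x)) = x := by
    intro x hx
    obtain ⟨habs, heq⟩ := hku x hx
    have hk0 : 0 < ku x := (abs_nonneg x).trans_lt habs
    have hxk1 : x / ku x < 1 := (div_lt_one hk0).2 ((le_abs_self x).trans_lt habs)
    have hxk2 : -1 < x / ku x := by
      rw [lt_div_iff₀ hk0]
      have := neg_abs_le x
      linarith
    have hθ1 : 0 < Real.arccos (x / ku x) := Real.arccos_pos.2 hxk1
    have hθ2 : Real.arccos (x / ku x) < Real.pi := by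
      refine lt_of_le_of_ne (Real.arccos_le_pi _) ?_
      rw [Ne, Real.arccos_eq_pi]
      linarith
    set θ := Real.arccos (x / ku x) with hθdef
    have hs0 : 0 < Real.sin θ := Real.sin_pos_of_pos_of_lt_pi hθ1 hθ2
    have hcos : Real.cos θ = x / ku x := Real.cos_arccos hxk2.le hxk1.le
    have hsin : Real.sin θ = Real.sqrt (1 - (x / ku x) ^ 2) := by
      rw [hθdef]; exact Real.sin_arccos _
    have hsqrt : Real.sqrt ((ku x) ^ 2 - x ^ 2) = ku x * Real.sin θ := by
      have h1 : (ku x) ^ 2 - x ^ 2 = (ku x) ^ 2 * (1 - (x / ku x) ^ 2) := by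
        field_simp
      rw [h1, Real.sqrt_mul (sq_nonneg _), Real.sqrt_sq hk0.le, hsin]
    rw [hsqrt] at heq
    have hk_eq : ku x = θ / (T * Real.sin θ) := by
      rw [eq_div_iff (mul_ne_zero hT.ne' hs0.ne')]
      linear_combination heq
    refine ⟨hθ1, hθ2, hk_eq, ?_⟩
    have h2 : θ * Real.cos θ / (T * Real.sin θ) = (θ / (T * Real.sin θ)) * Real.cos θ := by
      ring
    rw [auxA, h2, ← hk_eq, hcos]
    field_simp
  have hAmem : ∀ θ ∈ Ioo 0 Real.pi, auxA T θ * T < 1 := by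
    intro θ hθ
    have hs0 : 0 < Real.sin θ := Real.sin_pos_of_pos_of_lt_pi hθ.1 hθ.2
    have htc := aux_tc_lt hθ.1 hθ.2
    have h1 : auxA T θ * T = θ * Real.cos θ / Real.sin θ := by
      rw [auxA]; field_simp
    rw [h1, div_lt_one hs0]
    exact htc
  have hanti : StrictAntiOn (auxA T) (Ioo 0 Real.pi) := by
    apply strictAntiOn_of_deriv_neg (convex_Ioo _ _)
    · intro x hx
      exact (auxA_deriv T hT hx.1 hx.2).continuousAt.continuousWithinAt
    · intro x hx
      rw [interior_Ioo] at hx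
      have hs0 : 0 < Real.sin x := Real.sin_pos_of_pos_of_lt_pi hx.1 hx.2
      rw [(auxA_deriv T hT hx.1 hx.2).deriv]
      apply div_neg_of_neg_of_pos
      · linarith [aux_sc_lt x hx.1]
      · exact mul_pos hT (pow_pos hs0 2)
  have hginv : ∀ θ ∈ Ioo 0 Real.pi, Real.arccos (auxA T θ / ku (auxA T θ)) = θ := by
    intro θ hθ
    have hx := hAmem θ hθ
    obtain ⟨h1, h2, _, h4⟩ := key _ hx
    exact hanti.injOn ⟨h1, h2⟩ hθ h4
  intro a ha
  obtain ⟨habs, _⟩ := hku a ha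
  have hk0 : 0 < ku a := (abs_nonneg a).trans_lt habs
  obtain ⟨hθ1, hθ2, hk_eq, hA_eq⟩ := key a ha
  set θa := Real.arccos (a / ku a) with hθa
  have hs0 : 0 < Real.sin θa := Real.sin_pos_of_pos_of_lt_pi hθ1 hθ2
  have hsc : Real.sin θa * Real.cos θa < θa := aux_sc_lt θa hθ1
  have ha2 : a = θa * Real.cos θa / (T * Real.sin θa) := by
    rw [← hA_eq, auxA]
  -- positivity of the denominator
  have hden : (ku a) ^ 2 * T - a = θa * (θa - Real.sin θa * Real.cos θa) / (T * Real.sin θa ^ 2) := by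
    rw [hk_eq]
    nth_rewrite 1 [ha2]
    field_simp
  have hpos : 0 < (ku a) ^ 2 * T - a := by
    rw [hden]
    apply div_pos
    · nlinarith
    · exact mul_pos hT (pow_pos hs0 2)
  refine ⟨by linarith, ?_, ?_⟩
  · -- differentiability
    have hso : IsOpen {x : ℝ | x * T < 1} :=
      isOpen_lt (continuous_id.mul continuous_const) continuous_const
    have hsa : {x : ℝ | x * T < 1} ∈ 𝓝 a := hso.mem_nhds ha
    set g : ℝ → ℝ := fun x => Real.arccos (x / ku x) with hg
    have hganti : ∀ x ∈ {x : ℝ | x * T < 1}, ∀ y ∈ {x : ℝ | x * T < 1}, x < y → g y < g x := by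
      intro x hx y hy hxy
      obtain ⟨hx1, hx2, _, hx4⟩ := key x hx
      obtain ⟨hy1, hy2, _, hy4⟩ := key y hy
      by_contra h
      push_neg at h
      have hx4' : auxA T (g x) = x := hx4
      have hy4' : auxA T (g y) = y := hy4
      rcases eq_or_lt_of_le h with heq | hlt
      · rw [← hx4', ← hy4', heq] at hxy
        exact lt_irrefl _ hxy
      · have h5 : auxA T (g y) < auxA T (g x) := hanti ⟨hx1, hx2⟩ ⟨hy1, hy2⟩ hlt
        rw [hx4', hy4'] at h5
        linarith
    have hmono : MonotoneOn (fun x => -(g x)) {x : ℝ | x * T < 1} := by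
      intro x hx y hy hxy
      rcases eq_or_lt_of_le hxy with rfl | h
      · exact le_refl _
      · exact neg_le_neg (hganti x hx y hy h).le
    have himg : (fun x => -(g x)) '' {x : ℝ | x * T < 1} ∈ 𝓝 (-(g a)) := by
      have hmem : -(g a) ∈ Ioo (-Real.pi) 0 := ⟨by simpa using neg_lt_neg hθ2, by simpa using hθ1⟩
      refine Filter.mem_of_superset (isOpen_Ioo.mem_nhds hmem) ?_
      rintro y ⟨hy1, hy2⟩
      refine ⟨auxA T (-y), hAmem _ ⟨by linarith, by linarith⟩, ?_⟩
      show -(g (auxA T (-y))) = y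
      rw [hg]
      simp only
      rw [hginv (-y) ⟨by linarith, by linarith⟩]
      ring
    have hcontneg : ContinuousAt (fun x => -(g x)) a :=
      continuousAt_of_monotoneOn_of_image_mem_nhds hmono hsa himg
    have hgcont : ContinuousAt g a := by
      have := hcontneg.neg
      simpa only [Pi.neg_def, neg_neg] using this
    have hga : g a = θa := rfl
    have hAd : HasDerivAt (auxA T)
        ((Real.sin θa * Real.cos θa - θa) / (T * Real.sin θa ^ 2)) (g a) := by
      rw [hga]; exact auxA_deriv T hT hθ1 hθ2
    have hdAne : (Real.sin θa * Real.cos θa - θa) / (T * Real.sin θa ^ 2) ≠ 0 := by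
      apply ne_of_lt
      apply div_neg_of_neg_of_pos
      · linarith
      · exact mul_pos hT (pow_pos hs0 2)
    have hfg : ∀ᶠ x in 𝓝 a, auxA T (g x) = x := by
      filter_upwards [hsa] with x hx
      exact (key x hx).2.2.2
    have hgd : HasDerivAt g ((Real.sin θa * Real.cos θa - θa) / (T * Real.sin θa ^ 2))⁻¹ a :=
      HasDerivAt.of_local_left_inverse hgcont hAd hdAne hfg
    have hKd : HasDerivAt (fun θ : ℝ => θ / (T * Real.sin θ))
        ((1 * (T * Real.sin θa) - θa * (T * Real.cos θa)) / (T * Real.sin θa) ^ 2) (g a) := by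
      rw [hga]
      exact (hasDerivAt_id θa).div ((Real.hasDerivAt_sin θa).const_mul T)
        (mul_ne_zero hT.ne' hs0.ne')
    have hcomp : HasDerivAt ((fun θ : ℝ => θ / (T * Real.sin θ)) ∘ g)
        ((1 * (T * Real.sin θa) - θa * (T * Real.cos θa)) / (T * Real.sin θa) ^ 2 *
          ((Real.sin θa * Real.cos θa - θa) / (T * Real.sin θa ^ 2))⁻¹) a :=
      hKd.comp a hgd
    have heve : ku =ᶠ[𝓝 a] (fun θ : ℝ => θ / (T * Real.sin θ)) ∘ g := by
      filter_upwards [hsa] with x hx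
      exact (key x hx).2.2.1
    have hku_d := hcomp.congr_of_eventuallyEq heve
    have hgoal : (1 * (T * Real.sin θa) - θa * (T * Real.cos θa)) / (T * Real.sin θa) ^ 2 *
          ((Real.sin θa * Real.cos θa - θa) / (T * Real.sin θa ^ 2))⁻¹ =
        ku a * (a * T - 1) / ((ku a) ^ 2 * T - a) := by
      have h1 : Real.sin θa * Real.cos θa - θa ≠ 0 := by nlinarith
      rw [eq_div_iff (ne_of_gt hpos), hk_eq, ha2]
      field_simp
      ring
    rw [hgoal] at hku_d
    exact hku_d
  · apply div_neg_of_neg_of_pos _ hpos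
    exact mul_neg_of_pos_of_neg hk0 (by linarith)
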